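/- For any two KRSB matrices with the same τ and the same block sizes L̃_1, …, L̃_K, say A = 𝒜(F, χ, {H_k}) and A' = 𝒜(F', χ', {H'_k}), the product is again a KRSB matrix with the same block sizes (i.e., there exist real numbers F'', χ'', H''_1, …, H''_K with A·A' = 𝒜(F'', χ'', {H''_k})), and A and A' commute: A·A' = A'·A. -/
import Mathlib


open Matrix Finset

/-- The KRSB matrix `𝒜(F, χ, {H_k})`:
`F·J_τ + χ·I_τ + Σ_{k=1}^K H_k·(I_{τ/L̃_k} ⊗ J_{L̃_k})`, written entrywise. -/
def krsbA (τ K : ℕ) (F χ : ℝ) (H : ℕ → ℝ) (L : ℕ → ℕ) : Matrix (Fin τ) (Fin τ) ℝ :=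
  Matrix.of fun i j =>
    F + (if i = j then χ else 0) +
      ∑ k ∈ Finset.Icc 1 K, (if (i : ℕ) / L k = (j : ℕ) / L k then H k else 0)

namespace KrsbAux

/-- block matrix -/
def Bm (τ d : ℕ) : Matrix (Fin τ) (Fin τ) ℝ :=
  Matrix.of fun i j => if (i : ℕ) / d = (j : ℕ) / d then 1 else 0

/-- all-ones matrix -/
def Jm (τ : ℕ) : Matrix (Fin τ) (Fin τ) ℝ := Matrix.of fun _ _ => 1

lemma divq (a b q : ℕ) (hb : 0 < b) : a / b = q ↔ q * b ≤ a ∧ a < (q + 1) * b := by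
  constructor
  · rintro rfl
    exact ⟨Nat.div_mul_le_self a b, (Nat.div_lt_iff_lt_mul hb).mp (Nat.lt_succ_self _)⟩
  · rintro ⟨h1, h2⟩
    exact Nat.div_eq_of_lt_le h1 h2

lemma count (τ d : ℕ) (hd : 0 < d) (hdvd : d ∣ τ) (j : Fin τ) :
    ∑ m : Fin τ, (if (m : ℕ) / d = (j : ℕ) / d then (1 : ℝ) else 0) = d := by
  rw [Fin.sum_univ_eq_sum_range (fun m => if m / d = (j : ℕ) / d then (1 : ℝ) else 0) τ]
  rw [Finset.sum_boole]
  have hτ : ((j : ℕ) / d + 1) * d ≤ τ := by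
    obtain ⟨c, rfl⟩ := hdvd
    have hc : (j : ℕ) / d < c := (Nat.div_lt_iff_lt_mul hd).mpr (lt_of_lt_of_eq j.isLt (mul_comm d c))
    calc ((j : ℕ) / d + 1) * d ≤ c * d := Nat.mul_le_mul_right d hc
      _ = d * c := mul_comm _ _
  have hfil : (range τ).filter (fun m => m / d = (j : ℕ) / d) =
      Ico (((j : ℕ) / d) * d) (((j : ℕ) / d + 1) * d) := by
    ext m
    simp only [mem_filter, mem_range, mem_Ico, divq m d _ hd]
    constructor
    · rintro ⟨_, h1, h2⟩; exact ⟨h1, h2⟩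
    · rintro ⟨h1, h2⟩; exact ⟨lt_of_lt_of_le h2 hτ, h1, h2⟩
  rw [hfil, Nat.card_Ico]
  have : ((j : ℕ) / d + 1) * d - ((j : ℕ) / d) * d = d := by
    rw [add_mul, one_mul, Nat.add_sub_cancel_left]
  rw [this]

lemma count' (τ d : ℕ) (hd : 0 < d) (hdvd : d ∣ τ) (j : Fin τ) :
    ∑ m : Fin τ, (if (j : ℕ) / d = (m : ℕ) / d then (1 : ℝ) else 0) = d := by
  rw [← count τ d hd hdvd j]
  exact Finset.sum_congr rfl fun m _ => if_congr eq_comm rfl rfl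

lemma Jm_mul_Jm (τ : ℕ) : Jm τ * Jm τ = (τ : ℝ) • Jm τ := by
  ext i j
  simp [Jm, Matrix.mul_apply, Finset.card_univ]

lemma Jm_mul_Bm (τ d : ℕ) (hd : 0 < d) (hdvd : d ∣ τ) :
    Jm τ * Bm τ d = (d : ℝ) • Jm τ := by
  ext i j
  simp only [Jm, Bm, Matrix.mul_apply, Matrix.smul_apply, Matrix.of_apply, one_mul,
    smul_eq_mul, mul_one]
  exact count τ d hd hdvd j

lemma Bm_mul_Jm (τ d : ℕ) (hd : 0 < d) (hdvd : d ∣ τ) :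
    Bm τ d * Jm τ = (d : ℝ) • Jm τ := by
  ext i j
  simp only [Jm, Bm, Matrix.mul_apply, Matrix.smul_apply, Matrix.of_apply, mul_one,
    smul_eq_mul]
  exact count' τ d hd hdvd i

lemma Bm_mul_Bm (τ d e : ℕ) (hd : 0 < d) (hde : d ∣ e) (heτ : e ∣ τ) :
    Bm τ d * Bm τ e = (d : ℝ) • Bm τ e := by
  ext i j
  simp only [Bm, Matrix.mul_apply, Matrix.smul_apply, Matrix.of_apply, smul_eq_mul,
    ite_mul, one_mul, zero_mul]
  have key : ∀ m : ℕ, (i : ℕ) / d = m / d → (i : ℕ) / e = m / e := by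
    intro m hm
    obtain ⟨c, rfl⟩ := hde
    rw [← Nat.div_div_eq_div_mul, ← Nat.div_div_eq_div_mul, hm]
  by_cases hij : (i : ℕ) / e = (j : ℕ) / e
  · rw [if_pos hij, mul_one]
    rw [← count' τ d hd (hde.trans heτ) i]
    refine Finset.sum_congr rfl fun m _ => ?_
    by_cases h : (i : ℕ) / d = (m : ℕ) / d
    · rw [if_pos h, if_pos h, if_pos (by rw [← key m h, hij])]
    · rw [if_neg h, if_neg h]
  · rw [if_neg hij, mul_zero]
    refine Finset.sum_eq_zero fun m _ => ?_
    by_cases h : (i : ℕ) / d = (m : ℕ) / d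
    · rw [if_pos h, if_neg (fun hme => hij (by rw [key m h, hme]))]
    · rw [if_neg h]

lemma Bm_transpose (τ d : ℕ) : (Bm τ d)ᵀ = Bm τ d := by
  ext i j
  simp only [Matrix.transpose_apply, Bm, Matrix.of_apply]
  exact if_congr eq_comm rfl rfl

lemma krsbA_transpose (τ K : ℕ) (F χ : ℝ) (H : ℕ → ℝ) (L : ℕ → ℕ) :
    (krsbA τ K F χ H L)ᵀ = krsbA τ K F χ H L := by
  ext i j
  simp only [Matrix.transpose_apply, krsbA, Matrix.of_apply]
  congr 1
  · congr 1
    exact if_congr eq_comm rfl rfl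
  · exact Finset.sum_congr rfl fun k _ => if_congr eq_comm rfl rfl

lemma krsbA_eq (τ K : ℕ) (F χ : ℝ) (H : ℕ → ℝ) (L : ℕ → ℕ) :
    krsbA τ K F χ H L = F • Jm τ + χ • (1 : Matrix (Fin τ) (Fin τ) ℝ) +
      ∑ k ∈ Icc 1 K, H k • Bm τ (L k) := by
  ext i j
  simp only [krsbA, Matrix.of_apply, Matrix.add_apply, Matrix.smul_apply, Jm,
    Matrix.one_apply, smul_eq_mul, mul_one, Matrix.sum_apply, Bm, mul_ite, mul_zero]

/-- the predicate: `M` is a KRSB matrix -/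
def isK (τ K : ℕ) (L : ℕ → ℕ) (M : Matrix (Fin τ) (Fin τ) ℝ) : Prop :=
  ∃ F χ H, M = krsbA τ K F χ H L

lemma isK_add {τ K : ℕ} {L : ℕ → ℕ} {M N : Matrix (Fin τ) (Fin τ) ℝ}
    (hM : isK τ K L M) (hN : isK τ K L N) : isK τ K L (M + N) := by
  obtain ⟨F, χ, H, rfl⟩ := hM
  obtain ⟨F', χ', H', rfl⟩ := hN
  refine ⟨F + F', χ + χ', fun k => H k + H' k, ?_⟩
  ext i j
  simp only [krsbA, Matrix.of_apply, Matrix.add_apply]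
  rw [Finset.sum_congr rfl (fun k (_ : k ∈ Icc 1 K) =>
    (by split_ifs <;> ring :
      (if (i : ℕ) / L k = (j : ℕ) / L k then H k + H' k else 0) =
        (if (i : ℕ) / L k = (j : ℕ) / L k then H k else 0) +
          (if (i : ℕ) / L k = (j : ℕ) / L k then H' k else 0))),
    Finset.sum_add_distrib]
  split_ifs <;> ring

lemma isK_smul {τ K : ℕ} {L : ℕ → ℕ} {M : Matrix (Fin τ) (Fin τ) ℝ} (c : ℝ)
    (hM : isK τ K L M) : isK τ K L (c • M) := by
  obtain ⟨F, χ, H, rfl⟩ := hM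
  refine ⟨c * F, c * χ, fun k => c * H k, ?_⟩
  ext i j
  simp only [krsbA, Matrix.of_apply, Matrix.smul_apply, smul_eq_mul]
  rw [mul_add, mul_add, Finset.mul_sum]
  congr 1
  · congr 1
    split_ifs <;> ring
  · exact Finset.sum_congr rfl fun k _ => by split_ifs <;> ring

lemma isK_zero (τ K : ℕ) (L : ℕ → ℕ) : isK τ K L 0 :=
  ⟨0, 0, fun _ => 0, by ext i j; simp [krsbA]⟩

lemma isK_sum {τ K : ℕ} {L : ℕ → ℕ} {ι : Type*} (s : Finset ι)
    (f : ι → Matrix (Fin τ) (Fin τ) ℝ) (h : ∀ x ∈ s, isK τ K L (f x)) :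
    isK τ K L (∑ x ∈ s, f x) :=
  Finset.sum_induction f (isK τ K L) (fun _ _ => isK_add) (isK_zero τ K L) h

lemma isK_J (τ K : ℕ) (L : ℕ → ℕ) : isK τ K L (Jm τ) :=
  ⟨1, 0, fun _ => 0, by ext i j; simp [krsbA, Jm]⟩

lemma isK_one (τ K : ℕ) (L : ℕ → ℕ) : isK τ K L 1 :=
  ⟨0, 1, fun _ => 0, by ext i j; simp [krsbA, Matrix.one_apply]⟩

lemma isK_B {τ K : ℕ} {L : ℕ → ℕ} {k : ℕ} (hk : k ∈ Icc 1 K) :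
    isK τ K L (Bm τ (L k)) := by
  refine ⟨0, 0, fun l => if l = k then 1 else 0, ?_⟩
  ext i j
  simp only [krsbA, Bm, Matrix.of_apply, zero_add, ite_self]
  rw [Finset.sum_congr rfl (fun l (_ : l ∈ Icc 1 K) =>
    (by split_ifs <;> rfl :
      (if (i : ℕ) / L l = (j : ℕ) / L l then (if l = k then (1:ℝ) else 0) else 0) =
        (if l = k then (if (i : ℕ) / L l = (j : ℕ) / L l then (1:ℝ) else 0) else 0))),
    Finset.sum_ite_eq' (Icc 1 K) k (fun l => if (i : ℕ) / L l = (j : ℕ) / L l then (1:ℝ) else 0),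
    if_pos hk]

end KrsbAux

open KrsbAux in
/-- the product of two KRSB matrices with the same `τ` and block sizes
is again a KRSB matrix with the same block sizes, and the two matrices commute. -/
theorem krsbA_mul_krsbA (τ K : ℕ) (hτ : 0 < τ) (hK : 0 < K)
    (F χ F' χ' : ℝ) (H H' : ℕ → ℝ) (L : ℕ → ℕ)
    (hLpos : ∀ k, 1 ≤ k → k ≤ K → 0 < L k)
    (hchain : ∀ k, 1 ≤ k → k < K → L k ∣ L (k + 1))
    (hdiv : L K ∣ τ) :
    (∃ (F'' χ'' : ℝ) (H'' : ℕ → ℝ),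
        krsbA τ K F χ H L * krsbA τ K F' χ' H' L = krsbA τ K F'' χ'' H'' L) ∧
      krsbA τ K F χ H L * krsbA τ K F' χ' H' L =
        krsbA τ K F' χ' H' L * krsbA τ K F χ H L := by
  -- monotone divisibility of block sizes
  have hmono : ∀ k l, 1 ≤ k → k ≤ l → l ≤ K → L k ∣ L l := by
    intro k l hk hkl hlK
    induction l, hkl using Nat.le_induction with
    | base => exact dvd_rfl
    | succ n hn ih =>
      exact (ih (by omega)).trans (hchain n (hk.trans hn) (by omega))
  have hLτ : ∀ k, k ∈ Icc 1 K → L k ∣ τ := fun k hk => by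
    simp only [mem_Icc] at hk
    exact (hmono k K hk.1 hk.2 le_rfl).trans hdiv
  have hLpos' : ∀ k, k ∈ Icc 1 K → 0 < L k := fun k hk => by
    simp only [mem_Icc] at hk
    exact hLpos k hk.1 hk.2
  -- multiplying a generator on the left of a KRSB matrix
  have hJmul : ∀ N, isK τ K L N → isK τ K L (Jm τ * N) := by
    rintro N ⟨F', χ', H', rfl⟩
    rw [krsbA_eq, mul_add, mul_add, Finset.mul_sum]
    refine isK_add (isK_add ?_ ?_) (isK_sum _ _ fun k hk => ?_)
    · rw [mul_smul_comm, Jm_mul_Jm]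
      exact isK_smul _ (isK_smul _ (isK_J τ K L))
    · rw [mul_smul_comm, mul_one]
      exact isK_smul _ (isK_J τ K L)
    · rw [mul_smul_comm, Jm_mul_Bm τ (L k) (hLpos' k hk) (hLτ k hk)]
      exact isK_smul _ (isK_smul _ (isK_J τ K L))
  have hBmul : ∀ k, k ∈ Icc 1 K → ∀ N, isK τ K L N → isK τ K L (Bm τ (L k) * N) := by
    rintro k hk N ⟨F', χ', H', rfl⟩
    rw [krsbA_eq, mul_add, mul_add, Finset.mul_sum]
    refine isK_add (isK_add ?_ ?_) (isK_sum _ _ fun l hl => ?_)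
    · rw [mul_smul_comm, Bm_mul_Jm τ (L k) (hLpos' k hk) (hLτ k hk)]
      exact isK_smul _ (isK_smul _ (isK_J τ K L))
    · rw [mul_smul_comm, mul_one]
      exact isK_smul _ (isK_B hk)
    · rw [mul_smul_comm]
      simp only [mem_Icc] at hk hl
      rcases le_total k l with hkl | hlk
      · rw [Bm_mul_Bm τ (L k) (L l) (hLpos k hk.1 hk.2) (hmono k l hk.1 hkl hl.2)
          ((hmono l K hl.1 hl.2 le_rfl).trans hdiv)]
        exact isK_smul _ (isK_smul _ (isK_B (by simp [mem_Icc, hl.1, hl.2])))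
      · have hsym : Bm τ (L k) * Bm τ (L l) = ((L l : ℝ) • Bm τ (L k))ᵀ := by
          rw [← Bm_mul_Bm τ (L l) (L k) (hLpos l hl.1 hl.2) (hmono l k hl.1 hlk hk.2)
            ((hmono k K hk.1 hk.2 le_rfl).trans hdiv), Matrix.transpose_mul,
            Bm_transpose, Bm_transpose]
        rw [hsym, Matrix.transpose_smul, Bm_transpose]
        exact isK_smul _ (isK_smul _ (isK_B (by simp [mem_Icc, hk.1, hk.2])))
  -- the product is KRSB
  have hprod : isK τ K L (krsbA τ K F χ H L * krsbA τ K F' χ' H' L) := by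
    have hN : isK τ K L (krsbA τ K F' χ' H' L) := ⟨F', χ', H', rfl⟩
    rw [krsbA_eq τ K F χ H L, add_mul, add_mul, Finset.sum_mul]
    refine isK_add (isK_add ?_ ?_) (isK_sum _ _ fun k hk => ?_)
    · rw [smul_mul_assoc]
      exact isK_smul _ (hJmul _ hN)
    · rw [smul_mul_assoc, one_mul]
      exact isK_smul _ hN
    · rw [smul_mul_assoc]
      exact isK_smul _ (hBmul k hk _ hN)
  obtain ⟨F'', χ'', H'', hE⟩ := hprod
  refine ⟨⟨F'', χ'', H'', hE⟩, ?_⟩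
  have hswap : krsbA τ K F' χ' H' L * krsbA τ K F χ H L =
      (krsbA τ K F χ H L * krsbA τ K F' χ' H' L)ᵀ := by
    rw [Matrix.transpose_mul, krsbA_transpose, krsbA_transpose]
  rw [hswap, hE, krsbA_transpose]
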